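/- For finite multisets x and y of natural numbers of the same cardinality, x ≤_m y if and only if either x = y, or there exists a natural number a such that the multiplicity of a in x is strictly less than the multiplicity of a in y and, for every natural number b > a, the multiplicities of b in x and in y are equal. -/

import Mathlib

namespace MsetPaper

/-- The maximum element of a multiset of naturals (`0` for the empty multiset). -/
def mmax (s : Multiset ℕ) : ℕ := s.sup

/-- The strict multiset order `x <ₘ y` of the paper: either `x` is empty and `y` is not,
or both are nonempty and either `max x < max y`, or the maxima agree and the multisets
with one occurrence of the maximum removed are again strictly ordered. -/
inductive MLt : Multiset ℕ → Multiset ℕ → Prop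
  | empty {y : Multiset ℕ} : y ≠ 0 → MLt 0 y
  | maxLt {x y : Multiset ℕ} : x ≠ 0 → y ≠ 0 → mmax x < mmax y → MLt x y
  | maxEq {x y : Multiset ℕ} : x ≠ 0 → y ≠ 0 → mmax x = mmax y →
      MLt (x.erase (mmax x)) (y.erase (mmax y)) → MLt x y

/-- The (non-strict) multiset order `x ≤ₘ y`. -/
def MLe (x y : Multiset ℕ) : Prop := MLt x y ∨ x = y

/-- The multiset of values taken by a vector. -/
def msetOf {n : ℕ} (x : Fin n → ℕ) : Multiset ℕ := (List.ofFn x : List ℕ)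


lemma sup_mem (s : Multiset ℕ) (hs : s ≠ 0) : s.sup ∈ s := by
  induction s using Multiset.induction with
  | empty => simp at hs
  | cons a s ih =>
    rcases eq_or_ne s 0 with rfl | h
    · simp
    · rcases le_total a s.sup with h1 | h1
      · have : (a ::ₘ s).sup = s.sup := by simp [sup_eq_right.mpr h1]
        rw [this]; exact Multiset.mem_cons_of_mem (ih h)
      · have : (a ::ₘ s).sup = a := by simp [sup_eq_left.mpr h1]
        rw [this]; exact Multiset.mem_cons_self a s

lemma mem_le_mmax {s : Multiset ℕ} {a : ℕ} (h : a ∈ s) : a ≤ mmax s :=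
  Multiset.le_sup h

lemma count_gt_mmax {s : Multiset ℕ} {b : ℕ} (h : mmax s < b) : s.count b = 0 := by
  rw [Multiset.count_eq_zero]
  intro hb
  exact absurd (mem_le_mmax hb) (not_le.mpr h)

lemma count_erase_mmax (s : Multiset ℕ) (hs : s ≠ 0) (c : ℕ) :
    s.count c = (s.erase (mmax s)).count c + if c = mmax s then 1 else 0 := by
  have h := Multiset.cons_erase (sup_mem s hs)
  show s.count c = (s.erase s.sup).count c + if c = s.sup then 1 else 0
  conv_lhs => rw [← h]
  rw [Multiset.count_cons]

lemma mlt_exists {x y : Multiset ℕ} (h : MLt x y) :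
    ∃ a : ℕ, x.count a < y.count a ∧ ∀ b : ℕ, a < b → x.count b = y.count b := by
  induction h with
  | @empty y' hy =>
    refine ⟨mmax y', ?_, ?_⟩
    · simpa [mmax] using Multiset.count_pos.mpr (sup_mem _ hy)
    · intro b hb
      simp [count_gt_mmax hb]
  | @maxLt x' y' hx hy hlt =>
    refine ⟨mmax y', ?_, ?_⟩
    · have h1 : x'.count (mmax y') = 0 := count_gt_mmax hlt
      rw [h1]
      exact Multiset.count_pos.mpr (sup_mem _ hy)
    · intro b hb
      rw [count_gt_mmax hb, count_gt_mmax (lt_trans hlt hb)]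
  | @maxEq x' y' hx hy heq _ ih =>
    obtain ⟨a, ha, hab⟩ := ih
    refine ⟨a, ?_, ?_⟩
    · have e1 := count_erase_mmax x' hx a
      have e2 := count_erase_mmax y' hy a
      rw [heq] at e1 ha
      by_cases ham : a = mmax y'
      · subst ham; rw [if_pos rfl] at e1 e2; omega
      · rw [if_neg ham] at e1 e2; omega
    · intro b hb
      have e1 := count_erase_mmax x' hx b
      have e2 := count_erase_mmax y' hy b
      have h3 := hab b hb
      rw [heq] at e1 h3
      by_cases hbm : b = mmax y'
      · subst hbm; rw [if_pos rfl] at e1 e2; omega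
      · rw [if_neg hbm] at e1 e2; omega

lemma exists_mlt : ∀ n (x y : Multiset ℕ), Multiset.card x = n →
    (∃ a : ℕ, x.count a < y.count a ∧ ∀ b : ℕ, a < b → x.count b = y.count b) → MLt x y := by
  intro n
  induction n using Nat.strong_induction_on with
  | _ n ih =>
    rintro x y hcard ⟨a, ha, hab⟩
    have hay : a ∈ y := Multiset.count_pos.mp (by omega)
    have hy : y ≠ 0 := by rintro rfl; simp at hay
    rcases eq_or_ne x 0 with rfl | hx
    · exact MLt.empty hy
    have hmx : mmax x ∈ x := sup_mem x hx
    have hle : mmax x ≤ mmax y := by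
      rcases le_or_gt (mmax x) a with h1 | h1
      · exact le_trans h1 (mem_le_mmax hay)
      · have h2 : y.count (mmax x) = x.count (mmax x) := (hab _ h1).symm
        have : mmax x ∈ y := Multiset.count_pos.mp (by
          rw [h2]; exact Multiset.count_pos.mpr hmx)
        exact mem_le_mmax this
    rcases lt_or_eq_of_le hle with hlt | heq
    · exact MLt.maxLt hx hy hlt
    · refine MLt.maxEq hx hy heq ?_
      have hn : Multiset.card (x.erase (mmax x)) < n := by
        rw [Multiset.card_erase_of_mem hmx, Nat.pred_eq_sub_one]
        have hc : Multiset.card x ≠ 0 := by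
          simpa [Multiset.card_eq_zero] using hx
        omega
      refine ih _ hn _ _ rfl ⟨a, ?_, ?_⟩
      · have e1 := count_erase_mmax x hx a
        have e2 := count_erase_mmax y hy a
        rw [heq] at e1 ⊢
        by_cases ham : a = mmax y
        · subst ham; rw [if_pos rfl] at e1 e2; omega
        · rw [if_neg ham] at e1 e2; omega
      · intro b hb
        have e1 := count_erase_mmax x hx b
        have e2 := count_erase_mmax y hy b
        have h3 := hab b hb
        rw [heq] at e1 ⊢
        by_cases hbm : b = mmax y
        · subst hbm; rw [if_pos rfl] at e1 e2; omega
        · rw [if_neg hbm] at e1 e2; omega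

/-- For multisets of equal cardinality, `x ≤ₘ y` iff `x = y` or some value occurs
strictly more often in `y` than in `x` while all larger values occur equally often. -/
theorem stmt4 (x y : Multiset ℕ) (h : Multiset.card x = Multiset.card y) :
    MLe x y ↔
      x = y ∨ ∃ a : ℕ, x.count a < y.count a ∧ ∀ b : ℕ, a < b → x.count b = y.count b := by
  constructor
  · rintro (hlt | rfl)
    · exact Or.inr (mlt_exists hlt)
    · exact Or.inl rfl
  · rintro (rfl | hex)
    · exact Or.inr rfl
    · exact Or.inl (exists_mlt _ x y rfl hex)


end MsetPaper
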